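/- Fix two voters N = {1, 2}, a path-connected domain D and a strategy-proof rule f : D^2 → A. If C = (x_1, …, x_v, x_1) with v ≥ 3 is a cycle in the adjacency graph G_∼ (i.e., x_1, …, x_v are pairwise distinct and x_k ∼ x_{k+1} for all k ∈ {1, …, v}, where x_{v+1} = x_1), then f behaves like a dictatorship on {x_1, …, x_v}. -/

import Mathlib

open Classical

set_option linter.unusedSectionVars false
set_option linter.unusedVariables false

/-- A strict preference over `A`, represented as a ranking bijection:
`P k` is the `(k+1)`-th ranked alternative. -/
abbrev Pref (A : Type*) [Fintype A] := Fin (Fintype.card A) ≃ A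

variable {A : Type*} [Fintype A] [DecidableEq A] [Nonempty A]

/-- `rk P k` : the `(k+1)`-th ranked alternative of `P` (0-indexed, so `rk P 0 = r₁(P)`). -/
noncomputable def rk (P : Pref A) (k : ℕ) : A :=
  if h : k < Fintype.card A then P ⟨k, h⟩ else Classical.arbitrary A

/-- The peak `r₁(P)`. -/
noncomputable def peak (P : Pref A) : A := rk P 0

/-- The second-ranked alternative `r₂(P)`. -/
noncomputable def second (P : Pref A) : A := rk P 1

/-- `a` is strictly preferred to `b` under `P`. -/
def prefers (P : Pref A) (a b : A) : Prop := P.symm a < P.symm b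

/-- Two preferences are completely reversed. -/
def Reversed (P P' : Pref A) : Prop := ∀ a b : A, prefers P a b ↔ prefers P' b a

/-- A profile lies in the domain `D`. -/
def InDom (D : Set (Pref A)) {n : ℕ} (P : Fin n → Pref A) : Prop := ∀ i, P i ∈ D

/-- Unanimity (an SCF satisfying it is called a rule). -/
def IsRule (D : Set (Pref A)) {n : ℕ} (f : (Fin n → Pref A) → A) : Prop :=
  ∀ P : Fin n → Pref A, InDom D P → ∀ a : A, (∀ i, peak (P i) = a) → f P = a

/-- Strategy-proofness (relative to the domain `D`). -/
def StrategyProof (D : Set (Pref A)) {n : ℕ} (f : (Fin n → Pref A) → A) : Prop :=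
  ∀ P : Fin n → Pref A, InDom D P → ∀ i : Fin n, ∀ Q ∈ D,
    f P = f (Function.update P i Q) ∨ prefers (P i) (f P) (f (Function.update P i Q))

/-- The tops-only property. -/
def TopsOnly (D : Set (Pref A)) {n : ℕ} (f : (Fin n → Pref A) → A) : Prop :=
  ∀ P P' : Fin n → Pref A, InDom D P → InDom D P' →
    (∀ i, peak (P i) = peak (P' i)) → f P = f P'

/-- Anonymity. -/
def Anonymous (D : Set (Pref A)) {n : ℕ} (f : (Fin n → Pref A) → A) : Prop :=
  ∀ P : Fin n → Pref A, InDom D P → ∀ σ : Equiv.Perm (Fin n), f (P ∘ σ) = f P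

/-- `f` behaves like a dictatorship on `B`. -/
def DictatorOn (D : Set (Pref A)) {n : ℕ} (f : (Fin n → Pref A) → A) (B : Set A) : Prop :=
  ∃ i : Fin n, ∀ P : Fin n → Pref A, InDom D P → (∀ j, peak (P j) ∈ B) → f P = peak (P i)

/-- `f` is a dictatorship. -/
def Dictatorship (D : Set (Pref A)) {n : ℕ} (f : (Fin n → Pref A) → A) : Prop :=
  DictatorOn D f Set.univ

/-- A dictatorial domain. -/
def DictatorialDomain (D : Set (Pref A)) : Prop :=
  ∀ n : ℕ, 2 ≤ n → ∀ f : (Fin n → Pref A) → A,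
    IsRule D f → StrategyProof D f → Dictatorship D f

/-- A tops-only domain. -/
def TopsOnlyDomain (D : Set (Pref A)) : Prop :=
  ∀ n : ℕ, 2 ≤ n → ∀ f : (Fin n → Pref A) → A,
    IsRule D f → StrategyProof D f → TopsOnly D f

/-- Adjacency of two alternatives relative to the domain `D`. -/
def DomAdjacent (D : Set (Pref A)) (a b : A) : Prop :=
  ∃ P ∈ D, ∃ P' ∈ D, peak P = a ∧ second P = b ∧ peak P' = b ∧ second P' = a ∧
    ∀ k : ℕ, 2 ≤ k → rk P k = rk P' k

/-- The adjacency graph `G_∼` of the domain `D`. -/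
noncomputable def adjGraph (D : Set (Pref A)) : SimpleGraph A :=
  SimpleGraph.fromRel (DomAdjacent D)

/-- Path-connectedness of the domain. -/
def PathConnectedDom (D : Set (Pref A)) : Prop := (adjGraph D).Connected

/-- Diversity: the domain contains two completely reversed preferences. -/
def Diversity (D : Set (Pref A)) : Prop := ∃ P ∈ D, ∃ P' ∈ D, Reversed P P'

/-- `S(D^a)`: the set of alternatives second-ranked in some preference of `D` with peak `a`. -/
def secondsSet (D : Set (Pref A)) (a : A) : Set A := {b | ∃ P ∈ D, peak P = a ∧ second P = b}

/-- Leaf symmetry. -/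
def LeafSymmetry (D : Set (Pref A)) : Prop :=
  ∀ x : A, (∃! y, (adjGraph D).Adj x y) →
    (∃ u ∈ secondsSet D x, ∃ v ∈ secondsSet D x, u ≠ v) →
    ∃ z ∈ secondsSet D x, ¬ (adjGraph D).Adj x z ∧ x ∈ secondsSet D z

/-- Unidimensionality: path-connectedness, diversity and leaf symmetry. -/
def Unidimensional (D : Set (Pref A)) : Prop :=
  PathConnectedDom D ∧ Diversity D ∧ LeafSymmetry D

/-- The unique seconds property. -/
def UniqueSeconds (D : Set (Pref A)) : Prop := ∃ x b : A, secondsSet D x = {b}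

/-- Minimal richness. -/
def MinimallyRich (D : Set (Pref A)) : Prop := ∀ a : A, ∃ P ∈ D, peak P = a

/-- The vertex set `⟨x, y|T⟩` of the (in a tree, unique) shortest path between `x` and `y`. -/
def intv (T : SimpleGraph A) (x y : A) : Set A :=
  {z | T.dist x z + T.dist z y = T.dist x y}

/-- `a'` is the projection of `a` onto `B` in `T`. -/
def IsProjPt (T : SimpleGraph A) (B : Set A) (a a' : A) : Prop :=
  a' ∈ B ∧ ∀ b ∈ B, a' ∈ intv T a b

/-- The projection `Proj(a, B)` of `a` onto a path-closed set `B` in the tree `T`. -/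
noncomputable def projOn (T : SimpleGraph A) (B : Set A) (a : A) : A :=
  if h : ∃ a', IsProjPt T B a a' then h.choose else a

/-- `Γ(P)`: the vertex set of the minimal subtree of `T` spanning all the peaks. -/
def gammaSet (T : SimpleGraph A) {n : ℕ} (P : Fin n → Pref A) : Set A :=
  {c | ∃ i j : Fin n, c ∈ intv T (peak (P i)) (peak (P j))}

/-- The projection rule on `T` w.r.t. `xbar`. -/
noncomputable def projRule (T : SimpleGraph A) (xbar : A) {n : ℕ}
    (P : Fin n → Pref A) : A :=
  projOn T (gammaSet T P) xbar

/-- Single-peakedness on a tree. -/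
def SinglePeaked (T : SimpleGraph A) (P : Pref A) : Prop :=
  ∀ c d : A, c ≠ d → c ∈ intv T (peak P) d → prefers P c d

/-- Semi-single-peakedness on `T` w.r.t. the threshold `xbar`. -/
def SemiSP (T : SimpleGraph A) (xbar : A) (P : Pref A) : Prop :=
  (∀ c d : A, c ∈ intv T (peak P) xbar → d ∈ intv T (peak P) xbar → c ≠ d →
    c ∈ intv T (peak P) d → prefers P c d) ∧
  (∀ c : A, c ∉ intv T (peak P) xbar →
    prefers P (projOn T (intv T (peak P) xbar) c) c)

/-- A semi-single-peaked domain. -/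
def SemiSPDomain (D : Set (Pref A)) : Prop :=
  ∃ (T : SimpleGraph A) (xbar : A), T.IsTree ∧
    D ⊆ {P | SemiSP T xbar P} ∧ (adjGraph D).Connected

/-- `A^{a⇀b}`: the alternatives whose path to `b` goes through `a`. -/
def sideSet (T : SimpleGraph A) (a b : A) : Set A := {z | a ∈ intv T z b}

/-- `x = max^P(B)`: `x` is `P`'s best alternative of `B`. -/
def IsBestOf (P : Pref A) (x : A) (B : Set A) : Prop :=
  x ∈ B ∧ ∀ y ∈ B, y ≠ x → prefers P x y

/-- `a` and `b` are dual-thresholds in the tree `T`. -/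
def DualThresholds (T : SimpleGraph A) (a b : A) : Prop :=
  a ≠ b ∧ ∀ c : A, c ∉ intv T a b →
    projOn T (intv T a b) c = a ∨ projOn T (intv T a b) c = b

/-- An `(a,b)`-semi-hybrid preference on `T`. -/
def SemiHybridPref (T : SimpleGraph A) (a b : A) (P : Pref A) : Prop :=
  (peak P ∈ sideSet T a b \ {a} → SemiSP T a P ∧ IsBestOf P b (sideSet T b a)) ∧
  (peak P ∈ sideSet T b a \ {b} → SemiSP T b P ∧ IsBestOf P a (sideSet T a b)) ∧
  (peak P ∈ intv T a b → IsBestOf P a (sideSet T a b) ∧ IsBestOf P b (sideSet T b a))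

/-- `x` is a leaf of the subgraph of `G` induced on `B`. -/
def IsLeafOn (G : SimpleGraph A) (B : Set A) (x : A) : Prop :=
  x ∈ B ∧ ∃! y, y ∈ B ∧ G.Adj x y

/-- `D` is an `(a,b)`-semi-hybrid domain on the tree `T`. -/
def SemiHybridDomainOn (D : Set (Pref A)) (T : SimpleGraph A) (a b : A) : Prop :=
  T.IsTree ∧ DualThresholds T a b ∧ D ⊆ {P | SemiHybridPref T a b P} ∧
  (adjGraph D).Connected ∧
  (¬ ∃ (T' : SimpleGraph A) (a' b' : A), T'.IsTree ∧ DualThresholds T' a' b' ∧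
      D ⊆ {P | SemiHybridPref T' a' b' P} ∧ intv T' a' b' ⊂ intv T a b) ∧
  ((adjGraph D).IsTree →
    ∀ x : A, IsLeafOn (adjGraph D) (intv T a b) x →
      ∃ P ∈ D, ¬ SemiSP (adjGraph D) x P)

/-- `D` is a semi-hybrid domain. -/
def SemiHybridDomain (D : Set (Pref A)) : Prop :=
  ∃ (T : SimpleGraph A) (a b : A), SemiHybridDomainOn D T a b

/-- An `(a,b)`-hybrid preference on `T`. -/
def HybridPref (T : SimpleGraph A) (a b : A) (P : Pref A) : Prop :=
  (∀ y z : A, ((y ∈ sideSet T a b ∧ z ∈ sideSet T a b) ∨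
      (y ∈ sideSet T b a ∧ z ∈ sideSet T b a)) → y ≠ z →
    y ∈ intv T (peak P) z → prefers P y z) ∧
  (peak P ∈ sideSet T a b \ {a} → IsBestOf P a (intv T a b)) ∧
  (peak P ∈ sideSet T b a \ {b} → IsBestOf P b (intv T a b))

/-- `D` is an `(a,b)`-hybrid domain on the tree `T`. -/
def HybridDomainOn (D : Set (Pref A)) (T : SimpleGraph A) (a b : A) : Prop :=
  T.IsTree ∧ DualThresholds T a b ∧ D ⊆ {P | HybridPref T a b P} ∧
  (adjGraph D).Connected ∧
  (¬ ∃ (T' : SimpleGraph A) (a' b' : A), T'.IsTree ∧ DualThresholds T' a' b' ∧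
      D ⊆ {P | HybridPref T' a' b' P} ∧ intv T' a' b' ⊂ intv T a b) ∧
  3 ≤ (intv T a b).ncard

/-- `f` is an `(a,b)`-hybrid rule on the tree `T`. -/
def IsHybridRule (D : Set (Pref A)) {n : ℕ} (f : (Fin n → Pref A) → A)
    (T : SimpleGraph A) (a b : A) : Prop :=
  T.IsTree ∧ DualThresholds T a b ∧ 3 ≤ (intv T a b).ncard ∧
  ∃ i : Fin n, ∀ P : Fin n → Pref A, InDom D P →
    (peak (P i) ∈ intv T a b → f P = peak (P i)) ∧
    (peak (P i) ∈ sideSet T a b \ {a} → f P = projOn T (gammaSet T P) a) ∧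
    (peak (P i) ∈ sideSet T b a \ {b} → f P = projOn T (gammaSet T P) b)

/-- The PNT rule on `T` w.r.t. the edge `(x, y)`, with the two distinguished voters `i, j`. -/
noncomputable def pntRule (T : SimpleGraph A) (x y : A) {n : ℕ} (i j : Fin n)
    (P : Fin n → Pref A) : A :=
  if peak (P i) ∈ sideSet T y x then peak (P i)
  else if peak (P j) ∈ sideSet T x y then projOn T (gammaSet T P) x
  else if prefers (P j) x y then x else y

/-- `(x, y)` is a critical spot in `T` for the domain `D`. -/
def CriticalSpot (D : Set (Pref A)) (T : SimpleGraph A) (x y : A) : Prop :=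
  T.Adj x y ∧
  (∀ P ∈ D, peak P ∈ sideSet T x y → SemiSP T y P) ∧
  (∀ P ∈ D, peak P ∈ sideSet T y x → IsBestOf P x (sideSet T x y)) ∧
  (∃ P ∈ D, ∃ P' ∈ D, peak P = peak P' ∧ peak P ∈ sideSet T y x ∧
    prefers P y x ∧ prefers P' x y)

/-- `x` is a path in the graph `G` (pairwise distinct, consecutive vertices adjacent). -/
def IsPathIn (G : SimpleGraph A) {v : ℕ} (x : Fin v → A) : Prop :=
  Function.Injective x ∧
  ∀ (k : ℕ) (h : k + 1 < v), G.Adj (x ⟨k, Nat.lt_of_succ_lt h⟩) (x ⟨k + 1, h⟩)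

/-- `x` is a cycle in the graph `G`. -/
def IsCycleIn (G : SimpleGraph A) {v : ℕ} (x : Fin v → A) : Prop :=
  Function.Injective x ∧
  (∀ (k : ℕ) (h : k + 1 < v), G.Adj (x ⟨k, Nat.lt_of_succ_lt h⟩) (x ⟨k + 1, h⟩)) ∧
  ∀ (h : 0 < v), G.Adj (x ⟨v - 1, Nat.sub_lt h Nat.one_pos⟩) (x ⟨0, h⟩)

/-- The line `L^A` induced by the ranking of the preference `P`. -/
noncomputable def lineOf (P : Pref A) : SimpleGraph A :=
  SimpleGraph.fromRel (fun a b =>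
    ∃ k : ℕ, k + 1 < Fintype.card A ∧ rk P k = a ∧ rk P (k + 1) = b)

/-- The median of three natural numbers. -/
def med3 (a b c : ℕ) : ℕ := max (min a b) (min (max a b) c)

/-- The two-voter profile in which voter `i` reports `Pi` and the other voter reports `Q`. -/
noncomputable def prof2 (i : Fin 2) (Pi Q : Pref A) : Fin 2 → Pref A :=
  Function.update (fun _ => Q) i Pi

lemma rk_eq (P : Pref A) {k : ℕ} (h : k < Fintype.card A) : rk P k = P ⟨k, h⟩ := dif_pos h

lemma peak_eq (P : Pref A) : peak P = P ⟨0, Fintype.card_pos⟩ := rk_eq P Fintype.card_pos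

lemma second_eq (h : 1 < Fintype.card A) (P : Pref A) : second P = P ⟨1, h⟩ := rk_eq P h

lemma symm_peak (P : Pref A) : P.symm (peak P) = ⟨0, Fintype.card_pos⟩ := by
  rw [peak_eq]; exact P.symm_apply_apply _

lemma symm_second (h : 1 < Fintype.card A) (P : Pref A) :
    P.symm (second P) = ⟨1, h⟩ := by
  rw [second_eq h]; exact P.symm_apply_apply _

lemma not_prefers_peak (P : Pref A) {z : A} (h : prefers P z (peak P)) : False := by
  unfold prefers at h
  rw [symm_peak] at h
  simp [Fin.lt_def] at h

lemma eq_peak_of_prefers_second (h1 : 1 < Fintype.card A) (P : Pref A) {z : A}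
    (h : prefers P z (second P)) : z = peak P := by
  unfold prefers at h
  rw [symm_second h1, Fin.lt_def] at h
  have hz : P.symm z = ⟨0, Fintype.card_pos⟩ := by
    apply Fin.ext; simpa using Nat.lt_one_iff.mp h
  have := congrArg P hz
  rw [Equiv.apply_symm_apply] at this
  rw [this, peak_eq]

lemma not_prefers_second_peak (h1 : 1 < Fintype.card A) (P : Pref A) :
    ¬ prefers P (second P) (peak P) := by
  unfold prefers
  rw [symm_peak, symm_second h1]
  simp [Fin.lt_def]

lemma swap_top_two (h1 : 1 < Fintype.card A) {P P' : Pref A}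
    (hp : peak P' = second P) (hs : second P' = peak P)
    (ht : ∀ k, 2 ≤ k → rk P k = rk P' k)
    {u w : A} (hu : prefers P u w) (hw : prefers P' w u) :
    u = peak P ∧ w = second P := by
  have hm : 0 < Fintype.card A := Fintype.card_pos
  set i0 : Fin (Fintype.card A) := ⟨0, hm⟩ with hi0
  set i1 : Fin (Fintype.card A) := ⟨1, h1⟩ with hi1
  have hPP' : P' = (Equiv.swap i0 i1).trans P := by
    apply Equiv.ext; intro k
    rcases k with ⟨kv, hk⟩
    rcases Nat.lt_or_ge kv 2 with hk2 | hk2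
    · interval_cases kv
      · have : (⟨0, hk⟩ : Fin (Fintype.card A)) = i0 := rfl
        rw [this]
        simp only [Equiv.trans_apply, Equiv.swap_apply_left]
        calc P' i0 = peak P' := (peak_eq P').symm
          _ = second P := hp
          _ = P i1 := second_eq h1 P
      · have : (⟨1, hk⟩ : Fin (Fintype.card A)) = i1 := rfl
        rw [this]
        simp only [Equiv.trans_apply, Equiv.swap_apply_right]
        calc P' i1 = second P' := (second_eq h1 P').symm
          _ = peak P := hs
          _ = P i0 := peak_eq P
    · have hne0 : (⟨kv, hk⟩ : Fin (Fintype.card A)) ≠ i0 := by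
        simp [hi0, Fin.ext_iff]; omega
      have hne1 : (⟨kv, hk⟩ : Fin (Fintype.card A)) ≠ i1 := by
        simp [hi1, Fin.ext_iff]; omega
      simp only [Equiv.trans_apply, Equiv.swap_apply_of_ne_of_ne hne0 hne1]
      calc P' ⟨kv, hk⟩ = rk P' kv := (rk_eq P' hk).symm
        _ = rk P kv := (ht kv hk2).symm
        _ = P ⟨kv, hk⟩ := rk_eq P hk
  have hsymm : ∀ z, P'.symm z = Equiv.swap i0 i1 (P.symm z) := by
    intro z
    rw [hPP']
    simp [Equiv.symm_swap]
  unfold prefers at hu hw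
  rw [hsymm, hsymm] at hw
  set i := P.symm u with hi
  set j := P.symm w with hj
  have hii : i = i0 ∧ j = i1 := by
    by_cases hcase : i = i0
    · refine ⟨hcase, ?_⟩
      rw [hcase, Equiv.swap_apply_left] at hw
      have : Equiv.swap i0 i1 j = i0 := by
        apply Fin.ext
        have := (Fin.lt_def).mp hw
        simp only [hi1] at this
        simpa [hi0] using Nat.lt_one_iff.mp this
      have := congrArg (Equiv.swap i0 i1) this
      rwa [Equiv.swap_apply_self, Equiv.swap_apply_left] at this
    · by_cases hcase1 : i = i1
      · exfalso
        rw [hcase1, Equiv.swap_apply_right] at hw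
        rw [Fin.lt_def] at hw
        simp [hi0] at hw
      · exfalso
        have hival : 2 ≤ i.val := by
          rcases Nat.lt_or_ge i.val 2 with h2 | h2
          · interval_cases hh : i.val
            · exact absurd (Fin.ext hh : i = i0) hcase
            · exact absurd (Fin.ext hh : i = i1) hcase1
          · exact h2
        have hjval : 2 ≤ j.val := le_trans hival (le_of_lt ((Fin.lt_def).mp hu))
        have hji0 : j ≠ i0 := fun h => by have : j.val = 0 := congrArg Fin.val h; omega
        have hji1 : j ≠ i1 := fun h => by have : j.val = 1 := congrArg Fin.val h; omega
        have hii0 : i ≠ i0 := hcase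
        have hii1 : i ≠ i1 := hcase1
        rw [Equiv.swap_apply_of_ne_of_ne hji0 hji1,
            Equiv.swap_apply_of_ne_of_ne hii0 hii1] at hw
        exact absurd hu (not_lt.mpr (le_of_lt hw))
  constructor
  · have := congrArg P hii.1
    rw [hi, Equiv.apply_symm_apply] at this
    rw [this, peak_eq]
  · have := congrArg P hii.2
    rw [hj, Equiv.apply_symm_apply] at this
    rw [this, second_eq h1]

noncomputable def pr (Q1 Q2 : Pref A) : Fin 2 → Pref A := ![Q1, Q2]

lemma pr_zero (Q1 Q2 : Pref A) : pr Q1 Q2 0 = Q1 := rfl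
lemma pr_one (Q1 Q2 : Pref A) : pr Q1 Q2 1 = Q2 := rfl

lemma pr_indom {D : Set (Pref A)} {Q1 Q2 : Pref A} (h1 : Q1 ∈ D) (h2 : Q2 ∈ D) :
    InDom D (pr Q1 Q2) := by
  intro i; fin_cases i
  · exact h1
  · exact h2

lemma update_pr_zero (Q1 Q2 Q : Pref A) : Function.update (pr Q1 Q2) 0 Q = pr Q Q2 := by
  funext i; fin_cases i
  · simp; rfl
  · rw [Function.update_of_ne (by decide)]; rfl

lemma update_pr_one (Q1 Q2 Q : Pref A) : Function.update (pr Q1 Q2) 1 Q = pr Q1 Q := by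
  funext i; fin_cases i
  · rw [Function.update_of_ne (by decide)]; rfl
  · simp; rfl

lemma sp1 {D : Set (Pref A)} {f : (Fin 2 → Pref A) → A} (hsp : StrategyProof D f)
    {Q1 Q2 Q : Pref A} (h1 : Q1 ∈ D) (h2 : Q2 ∈ D) (h : Q ∈ D) :
    f (pr Q1 Q2) = f (pr Q Q2) ∨ prefers Q1 (f (pr Q1 Q2)) (f (pr Q Q2)) := by
  have := hsp (pr Q1 Q2) (pr_indom h1 h2) 0 Q h
  rwa [update_pr_zero, pr_zero] at this

lemma sp2 {D : Set (Pref A)} {f : (Fin 2 → Pref A) → A} (hsp : StrategyProof D f)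
    {Q1 Q2 Q : Pref A} (h1 : Q1 ∈ D) (h2 : Q2 ∈ D) (h : Q ∈ D) :
    f (pr Q1 Q2) = f (pr Q1 Q) ∨ prefers Q2 (f (pr Q1 Q2)) (f (pr Q1 Q)) := by
  have := hsp (pr Q1 Q2) (pr_indom h1 h2) 1 Q h
  rwa [update_pr_one, pr_one] at this

lemma unan {D : Set (Pref A)} {f : (Fin 2 → Pref A) → A} (hrule : IsRule D f)
    {Q1 Q2 : Pref A} {a : A} (h1 : Q1 ∈ D) (h2 : Q2 ∈ D)
    (ha1 : peak Q1 = a) (ha2 : peak Q2 = a) : f (pr Q1 Q2) = a := by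
  refine hrule _ (pr_indom h1 h2) a ?_
  intro i; fin_cases i
  · exact ha1
  · exact ha2

/-- Transfer lemma for voter 1: if the outcome equals voter 1's peak, it persists
when voter 1 switches to any same-peak preference. -/
lemma transfer1 {D : Set (Pref A)} {f : (Fin 2 → Pref A) → A} (hsp : StrategyProof D f)
    {Q1 Q1' Q2 : Pref A} (h1 : Q1 ∈ D) (h1' : Q1' ∈ D) (h2 : Q2 ∈ D)
    (hpk : peak Q1' = peak Q1) (hout : f (pr Q1 Q2) = peak Q1) :
    f (pr Q1' Q2) = peak Q1 := by
  rcases sp1 hsp h1' h2 h1 with h | h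
  · rw [h, hout]
  · rw [hout, ← hpk] at h
    exact absurd h (fun hh => not_prefers_peak Q1' hh)

lemma transfer2 {D : Set (Pref A)} {f : (Fin 2 → Pref A) → A} (hsp : StrategyProof D f)
    {Q1 Q2 Q2' : Pref A} (h1 : Q1 ∈ D) (h2 : Q2 ∈ D) (h2' : Q2' ∈ D)
    (hpk : peak Q2' = peak Q2) (hout : f (pr Q1 Q2) = peak Q2) :
    f (pr Q1 Q2') = peak Q2 := by
  rcases sp2 hsp h1 h2' h2 with h | h
  · rw [h, hout]
  · rw [hout, ← hpk] at h
    exact absurd h (fun hh => not_prefers_peak Q2' hh)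

/-- Observation 1: every two-voter strategy-proof rule behaves
like a dictatorship on a cycle of the adjacency graph. -/
theorem stmt16_dictatorship_on_cycle (D : Set (Pref A)) (hD : D.Nonempty)
    (hcard : 3 ≤ Fintype.card A) (hpc : PathConnectedDom D)
    (f : (Fin 2 → Pref A) → A) (hrule : IsRule D f) (hsp : StrategyProof D f)
    (v : ℕ) (hv : 3 ≤ v) (x : Fin v → A) (hcyc : IsCycleIn (adjGraph D) x) :
    DictatorOn D f (Set.range x) := by
  have h1 : 1 < Fintype.card A := by omega
  haveI : NeZero v := ⟨by omega⟩
  haveI : Fact (1 < v) := ⟨by omega⟩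
  -- reindex the cycle over ZMod v
  set y : ZMod v → A := fun k => x ⟨k.val, ZMod.val_lt k⟩ with hy
  have hyrange : ∀ k, y k ∈ Set.range x := fun k => ⟨_, rfl⟩
  have hyinj : Function.Injective y := by
    intro a b h
    have := hcyc.1 h
    exact ZMod.val_injective v (by simpa using congrArg Fin.val this)
  have hyne : ∀ (k : ZMod v) (c : ℕ), 0 < c → c < v → y k ≠ y (k + (c : ZMod v)) := by
    intro k c hc1 hc2 h
    have h2 := left_eq_add.mp (hyinj h)
    have h3 := congrArg ZMod.val h2
    rw [ZMod.val_natCast, Nat.mod_eq_of_lt hc2, ZMod.val_zero] at h3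
    omega
  have hxy : ∀ (n : ℕ) (hn : n < v), x ⟨n, hn⟩ = y ((n : ℕ) : ZMod v) := by
    intro n hn
    have : ((n : ℕ) : ZMod v).val = n := by rw [ZMod.val_natCast, Nat.mod_eq_of_lt hn]
    simp only [hy]
    congr 1
    exact (Fin.ext this.symm)
  have hadj : ∀ k : ZMod v, (adjGraph D).Adj (y k) (y (k + 1)) := by
    intro k
    have hk := ZMod.val_lt k
    have hval1 : (1 : ZMod v).val = 1 := ZMod.val_one v
    by_cases h : k.val + 1 < v
    · have hval : (k + 1).val = k.val + 1 := by
        rw [ZMod.val_add, hval1, Nat.mod_eq_of_lt h]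
      have := hcyc.2.1 k.val h
      have e1 : x ⟨k.val, Nat.lt_of_succ_lt h⟩ = y k := by
        simp only [hy]
      have e2 : x ⟨k.val + 1, h⟩ = y (k + 1) := by
        simp only [hy]; congr 1; exact Fin.ext hval.symm
      rwa [e1, e2] at this
    · have hlast : k.val = v - 1 := by omega
      have hval : (k + 1).val = 0 := by
        rw [ZMod.val_add, hval1, hlast]
        have : v - 1 + 1 = v := by omega
        rw [this, Nat.mod_self]
      have := hcyc.2.2 (by omega)
      have e1 : x ⟨v - 1, Nat.sub_lt (by omega) Nat.one_pos⟩ = y k := by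
        simp only [hy]; congr 1; exact Fin.ext hlast.symm
      have e2 : x ⟨0, by omega⟩ = y (k + 1) := by
        simp only [hy]; congr 1; exact Fin.ext hval.symm
      rwa [e1, e2] at this
  -- extract swap-pair witnesses on every edge of the cycle
  have hwit : ∀ k : ZMod v, ∃ Pa, Pa ∈ D ∧ ∃ Pb, Pb ∈ D ∧ peak Pa = y k ∧
      second Pa = y (k + 1) ∧ peak Pb = y (k + 1) ∧ second Pb = y k ∧
      ∀ j, 2 ≤ j → rk Pa j = rk Pb j := by
    intro k
    have h := hadj k
    rw [adjGraph, SimpleGraph.fromRel_adj] at h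
    rcases h with ⟨hne, h | h⟩
    · obtain ⟨P, hP, P', hP', e1, e2, e3, e4, e5⟩ := h
      exact ⟨P, hP, P', hP', e1, e2, e3, e4, e5⟩
    · obtain ⟨P, hP, P', hP', e1, e2, e3, e4, e5⟩ := h
      exact ⟨P', hP', P, hP, e3, e4, e1, e2, fun j hj => (e5 j hj).symm⟩
  choose Aw hAwD Bw hBwD hA1 hA2 hB1 hB2 htail using hwit
  -- edge lemma: the outcome of an edge profile is one of the two edge vertices
  have edge : ∀ k : ZMod v, f (pr (Aw k) (Bw k)) = y k ∨ f (pr (Aw k) (Bw k)) = y (k+1) := by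
    intro k
    rcases sp1 hsp (hAwD k) (hBwD k) (hBwD k) with h | h
    · right; rw [h]; exact unan hrule (hBwD k) (hBwD k) (hB1 k) (hB1 k)
    · left
      rw [unan hrule (hBwD k) (hBwD k) (hB1 k) (hB1 k), ← hA2 k] at h
      rw [eq_peak_of_prefers_second h1 (Aw k) h]; exact hA1 k
  -- exclusion lemma: if voter 1 wins edge k, his row never yields y (k+1)
  have d1 : ∀ k : ZMod v, f (pr (Aw k) (Bw k)) = y k →
      ∀ Q2 ∈ D, f (pr (Aw k) Q2) ≠ y (k + 1) := by
    intro k hw Q2 hQ2 hbad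
    rcases sp2 hsp (hAwD k) (hBwD k) hQ2 with h | h
    · rw [hw, hbad] at h
      exact hyne k 1 one_pos (by omega) (by rwa [Nat.cast_one])
    · rw [hw, hbad, ← hB2 k, ← hB1 k] at h
      exact not_prefers_second_peak h1 (Bw k) h
  -- propagation of voter 1 winning around the cycle
  have claim1 : ∀ k : ZMod v, f (pr (Aw k) (Bw k)) = y k →
      f (pr (Aw (k+1)) (Bw (k+1))) = y (k+1) := by
    intro k hw
    rcases edge (k+1) with h | hcontra
    · exact h
    exfalso
    have ha := d1 k hw
    have hpq : f (pr (Aw k) (Aw (k+1))) = f (pr (Aw k) (Bw (k+1))) := by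
      rcases sp2 hsp (hAwD k) (hAwD (k+1)) (hBwD (k+1)) with h | hpref
      · exact h
      rcases sp2 hsp (hAwD k) (hBwD (k+1)) (hAwD (k+1)) with h | hpref'
      · exact h.symm
      have hsw := swap_top_two h1 (P := Aw (k+1)) (P' := Bw (k+1))
        (by rw [hB1 (k+1), hA2 (k+1)]) (by rw [hB2 (k+1), hA1 (k+1)])
        (htail (k+1)) hpref hpref'
      exact absurd (hsw.1.trans (hA1 (k+1))) (ha _ (hAwD (k+1)))
    have hqyk : f (pr (Aw k) (Bw (k+1))) = y k := by
      rw [← hpq]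
      have hun : f (pr (Aw (k+1)) (Aw (k+1))) = y (k+1) :=
        unan hrule (hAwD (k+1)) (hAwD (k+1)) (hA1 (k+1)) (hA1 (k+1))
      rcases sp1 hsp (hAwD k) (hAwD (k+1)) (hAwD (k+1)) with h | hpref
      · exact absurd (h.trans hun) (ha _ (hAwD (k+1)))
      · rw [hun, ← hA2 k] at hpref
        exact (eq_peak_of_prefers_second h1 (Aw k) hpref).trans (hA1 k)
    have ha' : ∀ Q1 ∈ D, f (pr Q1 (Bw (k+1))) ≠ y (k+1) := by
      intro Q1 hQ1 hbad
      rcases sp1 hsp (hAwD (k+1)) (hBwD (k+1)) hQ1 with h | h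
      · rw [hcontra, hbad] at h
        exact hyne (k+1) 1 one_pos (by omega) (by rw [Nat.cast_one]; exact h.symm)
      · rw [hcontra, hbad, ← hA2 (k+1), ← hA1 (k+1)] at h
        exact not_prefers_second_peak h1 (Aw (k+1)) h
    have hqq' : f (pr (Aw k) (Bw (k+1))) = f (pr (Bw k) (Bw (k+1))) := by
      rcases sp1 hsp (hAwD k) (hBwD (k+1)) (hBwD k) with h | hpref
      · exact h
      rcases sp1 hsp (hBwD k) (hBwD (k+1)) (hAwD k) with h | hpref'
      · exact h.symm
      have hsw := swap_top_two h1 (P := Aw k) (P' := Bw k)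
        (by rw [hB1 k, hA2 k]) (by rw [hB2 k, hA1 k]) (htail k) hpref hpref'
      exact absurd (hsw.2.trans (hA2 k)) (ha' _ (hBwD k))
    have hq'2 : f (pr (Bw k) (Bw (k+1))) = y (k+1+1) := by
      have hun : f (pr (Bw k) (Bw k)) = y (k+1) :=
        unan hrule (hBwD k) (hBwD k) (hB1 k) (hB1 k)
      rcases sp2 hsp (hBwD k) (hBwD (k+1)) (hBwD k) with h | hpref
      · exact absurd (h.trans hun) (ha' _ (hBwD k))
      · rw [hun, ← hB2 (k+1)] at hpref
        exact (eq_peak_of_prefers_second h1 (Bw (k+1)) hpref).trans (hB1 (k+1))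
    have : y k = y (k + (2:ℕ)) := by
      rw [← hqyk, hqq', hq'2]; congr 1; push_cast; ring
    exact hyne k 2 (by omega) (by omega) this
  -- dichotomy: one voter wins all (oriented) edge profiles
  have dich : (∀ k, f (pr (Aw k) (Bw k)) = y k) ∨
      (∀ k, f (pr (Aw k) (Bw k)) = y (k+1)) := by
    by_cases hex : ∃ k, f (pr (Aw k) (Bw k)) = y k
    · left
      obtain ⟨k0, hk0⟩ := hex
      have prop : ∀ n : ℕ, f (pr (Aw (k0 + (n : ZMod v))) (Bw (k0 + (n : ZMod v)))) = y (k0 + (n : ZMod v)) := by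
        intro n
        induction n with
        | zero => simpa using hk0
        | succ n ih =>
          have := claim1 _ ih
          have e : (k0 + (((n:ℕ)+1 : ℕ) : ZMod v)) = k0 + ((n:ℕ) : ZMod v) + 1 := by
            push_cast; ring
          rw [e]; exact this
      intro k
      have := prop ((k - k0).val)
      have e : k0 + (((k - k0).val : ℕ) : ZMod v) = k := by
        rw [ZMod.natCast_rightInverse (k - k0)]; ring
      rwa [e] at this
    · right
      push_neg at hex
      intro k
      rcases edge k with h | h
      · exact absurd h (hex k)
      · exact h
  rcases dich with hw | hw
  · -- voter 1 is the dictator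
    have main : ∀ (d : ℕ) (k : ZMod v) (Q2 : Pref A), Q2 ∈ D →
        peak Q2 = y (k + (d : ZMod v)) → f (pr (Aw k) Q2) = y k := by
      intro d
      induction d with
      | zero =>
        intro k Q2 hQ2 hpk
        exact unan hrule (hAwD k) hQ2 (hA1 k) (by rw [hpk]; congr 1; simp)
      | succ d ih =>
        intro k Q2 hQ2 hpk
        have hIH : f (pr (Aw (k+1)) Q2) = y (k+1) := by
          refine ih (k+1) Q2 hQ2 ?_
          rw [hpk]; congr 1; push_cast; ring
        rcases sp1 hsp (hAwD k) hQ2 (hAwD (k+1)) with h | hpref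
        · exact absurd (h.trans hIH) (d1 k (hw k) Q2 hQ2)
        · rw [hIH, ← hA2 k] at hpref
          exact (eq_peak_of_prefers_second h1 (Aw k) hpref).trans (hA1 k)
    refine ⟨0, ?_⟩
    intro P hin hpk
    obtain ⟨i, hi⟩ := hpk 0
    obtain ⟨j, hj⟩ := hpk 1
    set ki : ZMod v := ((i.val : ℕ) : ZMod v) with hki
    set kj : ZMod v := ((j.val : ℕ) : ZMod v) with hkj
    have hpk0 : peak (P 0) = y ki := by
      rw [← hi, ← hxy i.val i.isLt]
    have hpk1 : peak (P 1) = y kj := by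
      rw [← hj, ← hxy j.val j.isLt]
    have hd : peak (P 1) = y (ki + (((kj - ki).val : ℕ) : ZMod v)) := by
      rw [hpk1]; congr 1
      rw [ZMod.natCast_rightInverse (kj - ki)]; ring
    have h0 := main _ ki (P 1) (hin 1) hd
    have h2 : f (pr (P 0) (P 1)) = peak (Aw ki) :=
      transfer1 hsp (hAwD ki) (hin 0) (hin 1)
        (by rw [hA1 ki, hpk0]) (by rw [hA1 ki]; exact h0)
    have hPeq : pr (P 0) (P 1) = P := by
      funext i2; fin_cases i2 <;> rfl
    have hfP : f P = f (pr (P 0) (P 1)) := by rw [hPeq]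
    rw [hfP, h2, hA1 ki]
    exact hpk0.symm
  · -- voter 2 is the dictator
    have main2 : ∀ (d : ℕ) (k : ZMod v) (Q1 : Pref A), Q1 ∈ D →
        peak Q1 = y (k + 1 - (d : ZMod v)) → f (pr Q1 (Bw k)) = y (k+1) := by
      intro d
      induction d with
      | zero =>
        intro k Q1 hQ1 hpk
        exact unan hrule hQ1 (hBwD k) (by rw [hpk]; congr 1; simp) (hB1 k)
      | succ d ih =>
        intro k Q1 hQ1 hpk
        have hIH : f (pr Q1 (Bw (k-1))) = y k := by
          have := ih (k-1) Q1 hQ1 (by rw [hpk]; congr 1; push_cast; ring)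
          rwa [show (k - 1 + 1 : ZMod v) = k by ring] at this
        have hd1' : f (pr Q1 (Bw k)) ≠ y k := by
          intro hbad
          rcases sp1 hsp (hAwD k) (hBwD k) hQ1 with h | h
          · rw [hw k, hbad] at h
            exact hyne k 1 one_pos (by omega) (by rw [Nat.cast_one]; exact h.symm)
          · rw [hw k, hbad, ← hA2 k, ← hA1 k] at h
            exact not_prefers_second_peak h1 (Aw k) h
        rcases sp2 hsp hQ1 (hBwD k) (hBwD (k-1)) with h | hpref
        · exact absurd (h.trans hIH) hd1'
        · rw [hIH, ← hB2 k] at hpref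
          exact (eq_peak_of_prefers_second h1 (Bw k) hpref).trans (hB1 k)
    refine ⟨1, ?_⟩
    intro P hin hpk
    obtain ⟨i, hi⟩ := hpk 0
    obtain ⟨j, hj⟩ := hpk 1
    set ki : ZMod v := ((i.val : ℕ) : ZMod v) with hki
    set kj : ZMod v := ((j.val : ℕ) : ZMod v) with hkj
    have hpk0 : peak (P 0) = y ki := by
      rw [← hi, ← hxy i.val i.isLt]
    have hpk1 : peak (P 1) = y kj := by
      rw [← hj, ← hxy j.val j.isLt]
    have hd : peak (P 0) = y ((kj - 1) + 1 - (((kj - ki).val : ℕ) : ZMod v)) := by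
      rw [hpk0]; congr 1
      rw [ZMod.natCast_rightInverse (kj - ki)]; ring
    have h0 := main2 _ (kj - 1) (P 0) (hin 0) hd
    have h0' : f (pr (P 0) (Bw (kj - 1))) = y kj := by
      rwa [show (kj - 1 + 1 : ZMod v) = kj by ring] at h0
    have hBpk : peak (Bw (kj - 1)) = y kj := by
      rw [hB1 (kj-1)]; congr 1; ring
    have h2 : f (pr (P 0) (P 1)) = peak (Bw (kj - 1)) :=
      transfer2 hsp (hin 0) (hBwD (kj-1)) (hin 1)
        (by rw [hBpk]; exact hpk1)
        (by rw [hBpk]; exact h0')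
    have hPeq : pr (P 0) (P 1) = P := by
      funext i2; fin_cases i2 <;> rfl
    have hfP : f P = f (pr (P 0) (P 1)) := by rw [hPeq]
    rw [hfP, h2, hBpk]
    exact hpk1.symm
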